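/- Let n ≥ 3 and let R : ℝ² → ℝ² be the rotation about the origin by angle 2π/n. If E ⊆ ℝ² is an ellipse satisfying R(E) = E, then E is a closed disk centered at the origin. -/

import Mathlib

open MeasureTheory Metric Set

noncomputable section

/-- `Euc n` is the Euclidean space `ℝⁿ`. -/
abbrev Euc (n : ℕ) : Type := EuclideanSpace ℝ (Fin n)

/-- A state space of linear dimension `ℓ`: a compact convex set contained in (and affinely
spanning) an affine hyperplane not through the origin, here written as `{x | f x = 1}`
for a nonzero linear functional `f`. -/
def IsStateSpace {ℓ : ℕ} (𝕊 : Set (Euc ℓ)) : Prop :=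
  IsCompact 𝕊 ∧ Convex ℝ 𝕊 ∧
    ∃ f : Euc ℓ →ₗ[ℝ] ℝ, f ≠ 0 ∧
      (affineSpan ℝ 𝕊 : Set (Euc ℓ)) = {x | f x = 1}

/-- `R` is admissible for the data set `X` (w.r.t. the state space `𝕊`): it is the image of `𝕊`
under some linear map and satisfies `X ⊆ R ⊆ aff X`. -/
def Admissible {ℓ n : ℕ} (𝕊 : Set (Euc ℓ)) (X R : Set (Euc n)) : Prop :=
  (∃ M : Euc ℓ →ₗ[ℝ] Euc n, R = M '' 𝕊) ∧ X ⊆ R ∧ R ⊆ (affineSpan ℝ X : Set (Euc n))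

/-- Data-driven inference: the admissible sets for `X` of minimal `d`-dimensional Hausdorff
measure, where `d = dim aff X`. -/
def ddi {ℓ n : ℕ} (X : Set (Euc n)) (𝕊 : Set (Euc ℓ)) : Set (Set (Euc n)) :=
  {R | Admissible 𝕊 X R ∧ ∀ R' : Set (Euc n), Admissible 𝕊 X R' →
      μH[(Module.finrank ℝ (affineSpan ℝ X).direction : ℝ)] R ≤
        μH[(Module.finrank ℝ (affineSpan ℝ X).direction : ℝ)] R'}

/-- A (hyper)-ellipsoid state space in `ℝ^ℓ`: the image of the closed unit ball of `ℝ^(ℓ-1)`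
under an injective affine map. -/
def IsHyperEllipsoid {ℓ : ℕ} (𝕊 : Set (Euc ℓ)) : Prop :=
  ∃ F : Euc (ℓ - 1) →ᵃ[ℝ] Euc ℓ, Function.Injective F ∧ 𝕊 = F '' closedBall 0 1

/-- An ellipsoid in `ℝ^d`: the image of the closed unit ball under an invertible affine
transformation. -/
def IsEllipsoid {d : ℕ} (E : Set (Euc d)) : Prop :=
  ∃ F : Euc d ≃ᵃ[ℝ] Euc d, E = F '' closedBall 0 1

set_option maxHeartbeats 2000000 in
theorem stmt_15 (n : ℕ) (hn : 3 ≤ n) (R : Euc 2 →ₗ[ℝ] Euc 2)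
    (hR : ∀ x : Euc 2,
      R x 0 = Real.cos (2 * Real.pi / n) * x 0 - Real.sin (2 * Real.pi / n) * x 1 ∧
      R x 1 = Real.sin (2 * Real.pi / n) * x 0 + Real.cos (2 * Real.pi / n) * x 1)
    (E : Set (Euc 2)) (hE : IsEllipsoid E) (hinv : R '' E = E) :
    ∃ r : ℝ, 0 < r ∧ E = closedBall (0 : Euc 2) r := by
  obtain ⟨F, hEF⟩ := hE
  set C := Real.cos (2 * Real.pi / n) with hCdef
  set S := Real.sin (2 * Real.pi / n) with hSdef
  -- basic trig facts
  have hn' : (3:ℝ) ≤ n := by exact_mod_cast hn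
  have hnp : (0:ℝ) < n := by linarith
  have hpi := Real.pi_pos
  have hθpos : 0 < 2*Real.pi/n := by positivity
  have hθlt : 2*Real.pi/n < Real.pi := by rw [div_lt_iff₀ hnp]; nlinarith
  have hS : 0 < S := Real.sin_pos_of_pos_of_lt_pi hθpos hθlt
  have hpy : S^2 + C^2 = 1 := Real.sin_sq_add_cos_sq _
  have hC : C < 1 := by nlinarith
  -- R is injective
  have hcoord : ∀ z : Euc 2, z 0 = C * (R z) 0 + S * (R z) 1 ∧
      z 1 = -S * (R z) 0 + C * (R z) 1 := by
    intro z
    obtain ⟨h1, h2⟩ := hR z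
    rw [h1, h2]
    constructor
    · linear_combination (-(z 0)) * hpy
    · linear_combination (-(z 1)) * hpy
  have hRinj : Function.Injective R := by
    intro x y hxy
    obtain ⟨hx0, hx1⟩ := hcoord x
    obtain ⟨hy0, hy1⟩ := hcoord y
    ext i
    fin_cases i
    · show x 0 = y 0; rw [hx0, hy0, hxy]
    · show x 1 = y 1; rw [hx1, hy1, hxy]
  -- membership transfer under R
  have hRE : ∀ x : Euc 2, x ∈ E ↔ R x ∈ E := by
    intro x
    constructor
    · intro hx; rw [← hinv]; exact mem_image_of_mem _ hx
    · intro hx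
      rw [← hinv] at hx
      obtain ⟨y, hy, hyx⟩ := hx
      rwa [hRinj hyx] at hy
  -- the center
  set c := F 0 with hcdef
  have hFlin : ∀ x, F x = F.linear x + c := by
    intro x
    have := F.toAffineMap.map_vadd 0 x
    simpa using this
  have hcE : c ∈ E := by rw [hEF]; exact ⟨0, by simp, rfl⟩
  have hsym : ∀ x ∈ E, c + (c - x) ∈ E := by
    intro x hx
    rw [hEF] at hx ⊢
    obtain ⟨y, hy, rfl⟩ := hx
    refine ⟨-y, by simpa using hy, ?_⟩
    rw [hFlin, hFlin y, map_neg]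
    abel
  have hsym' : ∀ x ∈ E, R c + (R c - x) ∈ E := by
    intro x hx
    rw [← hinv] at hx ⊢
    obtain ⟨y, hy, rfl⟩ := hx
    refine ⟨c + (c - y), hsym y hy, ?_⟩
    simp only [map_add, map_sub]
  -- iterate to show R c = c
  have hRc : R c = c := by
    set v := R c + (R c - c) - c with hvdef
    have hiter : ∀ k : ℕ, c + k • v ∈ E := by
      intro k
      induction k with
      | zero => simpa using hcE
      | succ k ih =>
        have h1 := hsym _ ih
        have h2 := hsym' _ h1
        have : R c + (R c - (c + (c - (c + k • v)))) = c + (k+1) • v := by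
          rw [hvdef, succ_nsmul]; abel
        rwa [this] at h2
    have hcomp : IsCompact E := by
      rw [hEF]
      exact (isCompact_closedBall 0 1).image F.continuous_of_finiteDimensional
    obtain ⟨Cb, hCb⟩ := hcomp.isBounded.exists_norm_le
    have hv : v = 0 := by
      by_contra hv0
      have hvn : 0 < ‖v‖ := norm_pos_iff.mpr hv0
      obtain ⟨k, hk⟩ := exists_nat_gt ((Cb + ‖c‖) / ‖v‖)
      have hkb := hCb _ (hiter k)
      have h1 : ‖(k:ℕ) • v‖ ≤ Cb + ‖c‖ := by
        have e : (k:ℕ) • v = (c + k • v) - c := by abel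
        rw [e]
        calc ‖(c + (k:ℕ) • v) - c‖ ≤ ‖c + (k:ℕ) • v‖ + ‖c‖ := norm_sub_le _ _
          _ ≤ Cb + ‖c‖ := by linarith
      have h3 : ‖(k:ℕ) • v‖ = k * ‖v‖ := by
        rw [← Nat.cast_smul_eq_nsmul ℝ, norm_smul]; simp
      rw [div_lt_iff₀ hvn] at hk
      rw [h3] at h1
      linarith
    have h2 : (2:ℝ) • (R c - c) = 0 := by
      have : R c + (R c - c) - c = (2:ℝ) • (R c - c) := by
        rw [two_smul]; abel
      rw [← this, ← hvdef, hv]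
    have := smul_eq_zero.mp h2
    rcases this with h | h
    · norm_num at h
    · exact sub_eq_zero.mp h
  -- the center is the origin
  have hc0 : c = 0 := by
    obtain ⟨h1, h2⟩ := hR c
    have e1 : C * c 0 - S * c 1 = c 0 := by rw [← h1, hRc]
    have e2 : S * c 0 + C * c 1 = c 1 := by rw [← h2, hRc]
    have hx0 : (2 - 2*C) * c 0 = 0 := by
      linear_combination (C - 1) * e1 + S * e2 - (c 0) * hpy
    have hx0' : c 0 = 0 := by
      have : 2 - 2*C ≠ 0 := by nlinarith
      exact (mul_eq_zero.mp hx0).resolve_left this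
    have hx1' : c 1 = 0 := by
      have h3 : (1 - C) * c 1 = 0 := by
        rw [hx0'] at e2; linarith [e2]
      have : 1 - C ≠ 0 := by nlinarith
      exact (mul_eq_zero.mp h3).resolve_left this
    ext i; fin_cases i
    · simpa using hx0'
    · simpa using hx1'
  -- linear picture
  set L := F.linear with hLdef
  have hEL : E = ⇑L '' closedBall 0 1 := by
    rw [hEF]
    apply image_congr
    intro x _
    rw [hFlin, hc0, add_zero]
  have hmem : ∀ x : Euc 2, x ∈ E ↔ ‖L.symm x‖ ≤ 1 := by
    intro x
    rw [hEL]
    constructor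
    · rintro ⟨y, hy, rfl⟩
      simpa [mem_closedBall_zero_iff] using hy
    · intro hx
      exact ⟨L.symm x, mem_closedBall_zero_iff.mpr hx, L.apply_symm_apply x⟩
  -- norm invariance of the quadratic form
  have hiff : ∀ x : Euc 2, ‖L.symm (R x)‖ ≤ 1 ↔ ‖L.symm x‖ ≤ 1 := by
    intro x
    rw [← hmem, ← hmem, ← hRE]
  have hNR : ∀ x : Euc 2, ‖L.symm (R x)‖ = ‖L.symm x‖ := by
    intro x
    rcases eq_or_ne x 0 with rfl | hx0
    · simp
    have hsx : L.symm x ≠ 0 := by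
      simp only [ne_eq, EmbeddingLike.map_eq_zero_iff]; exact hx0
    have hRx0 : R x ≠ 0 := by
      intro h
      exact hx0 (hRinj (by rw [h, map_zero]))
    have hsRx : L.symm (R x) ≠ 0 := by
      simp only [ne_eq, EmbeddingLike.map_eq_zero_iff]; exact hRx0
    set α := ‖L.symm x‖ with hα
    set β := ‖L.symm (R x)‖ with hβ
    have hαp : 0 < α := norm_pos_iff.mpr hsx
    have hβp : 0 < β := norm_pos_iff.mpr hsRx
    have hscale : ∀ t : ℝ, 0 ≤ t → (t * β ≤ 1 ↔ t * α ≤ 1) := by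
      intro t ht
      have h1 : ‖L.symm (R (t • x))‖ = t * β := by
        rw [_root_.map_smul, _root_.map_smul, norm_smul, Real.norm_eq_abs, abs_of_nonneg ht]
      have h2 : ‖L.symm (t • x)‖ = t * α := by
        rw [_root_.map_smul, norm_smul, Real.norm_eq_abs, abs_of_nonneg ht]
      rw [← h1, ← h2]; exact hiff (t • x)
    have hle1 : α ≤ β := by
      have := (hscale β⁻¹ (by positivity)).mp (by rw [inv_mul_cancel₀ hβp.ne'])
      rw [inv_mul_le_one₀ hβp] at this  -- may need fixing
      exact this
    have hle2 : β ≤ α := by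
      have := (hscale α⁻¹ (by positivity)).mpr (by rw [inv_mul_cancel₀ hαp.ne'])
      rw [inv_mul_le_one₀ hαp] at this
      exact this
    linarith
  -- polarization: the bilinear form is R-invariant
  set B : Euc 2 → Euc 2 → ℝ := fun x y => inner ℝ (L.symm x) (L.symm y) with hBdef
  have hBR : ∀ x y : Euc 2, B (R x) (R y) = B x y := by
    intro x y
    have hpol : ∀ u w : Euc 2,
        B u w = (‖L.symm (u + w)‖^2 - ‖L.symm u‖^2 - ‖L.symm w‖^2)/2 := by
      intro u w
      rw [hBdef]
      simp only [map_add]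
      rw [real_inner_eq_norm_add_mul_self_sub_norm_mul_self_sub_norm_mul_self_div_two]
      ring_nf
    rw [hpol, hpol, ← map_add R, hNR, hNR, hNR]
  -- expand in coordinates
  set e0 : Euc 2 := EuclideanSpace.single (0:Fin 2) (1:ℝ) with he0
  set e1 : Euc 2 := EuclideanSpace.single (1:Fin 2) (1:ℝ) with he1
  have hdec : ∀ x : Euc 2, x = x 0 • e0 + x 1 • e1 := by
    intro x
    ext i; fin_cases i <;> simp [he0, he1, EuclideanSpace.single_apply]
  set a := B e0 e0 with ha
  set bb := B e0 e1 with hb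
  set cc := B e1 e1 with hc'
  have hBexp : ∀ s t u w : ℝ, B (s • e0 + t • e1) (u • e0 + w • e1)
      = s*u*a + (s*w + t*u)*bb + t*w*cc := by
    intro s t u w
    simp only [hBdef, map_add, _root_.map_smul, inner_add_left, inner_add_right,
      real_inner_smul_left, real_inner_smul_right, ha, hb, hc']
    linear_combination (-(t*u)) * (real_inner_comm (L.symm e1) (L.symm e0))
  have hRe0 : R e0 = C • e0 + S • e1 := by
    obtain ⟨h1, h2⟩ := hR e0
    ext i; fin_cases i
    · show R e0 0 = (C • e0 + S • e1) 0
      rw [h1]; simp [he0, he1, EuclideanSpace.single_apply]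
    · show R e0 1 = (C • e0 + S • e1) 1
      rw [h2]; simp [he0, he1, EuclideanSpace.single_apply]
  have hRe1 : R e1 = (-S) • e0 + C • e1 := by
    obtain ⟨h1, h2⟩ := hR e1
    ext i; fin_cases i
    · show R e1 0 = ((-S) • e0 + C • e1) 0
      rw [h1]; simp [he0, he1, EuclideanSpace.single_apply]
    · show R e1 1 = ((-S) • e0 + C • e1) 1
      rw [h2]; simp [he0, he1, EuclideanSpace.single_apply]
  have eq1 : C*C*a + (C*S + S*C)*bb + S*S*cc = a := by
    have := hBR e0 e0
    rwa [hRe0, hBexp] at this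
  have eq2 : C*(-S)*a + (C*C + S*(-S))*bb + S*C*cc = bb := by
    have := hBR e0 e1
    rwa [hRe0, hRe1, hBexp] at this
  have k1 : S^2*(cc - a) + 2*C*S*bb = 0 := by
    linear_combination eq1 - a * hpy
  have k2 : C*S*(cc - a) - 2*S^2*bb = 0 := by
    linear_combination eq2 - bb * hpy
  have hSbb : (2*S) * bb = 0 := by
    linear_combination C * k1 - S * k2 - 2*S*bb*hpy
  have hbb : bb = 0 := by
    have h2S : (2*S) ≠ 0 := by positivity
    exact (mul_eq_zero.mp hSbb).resolve_left h2S
  have hac : cc = a := by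
    have : S^2 * (cc - a) = 0 := by rw [hbb] at k1; linarith
    have h := (mul_eq_zero.mp this).resolve_left (by positivity)
    linarith
  -- the quadratic form is a multiple of the euclidean norm
  have hquad : ∀ x : Euc 2, ‖L.symm x‖^2 = a * ‖x‖^2 := by
    intro x
    have h1 : ‖L.symm x‖^2 = B x x := (real_inner_self_eq_norm_sq (L.symm x)).symm
    have h2 : ‖x‖^2 = (x 0)^2 + (x 1)^2 := by
      rw [EuclideanSpace.norm_eq, Real.sq_sqrt (by positivity)]
      simp [Fin.sum_univ_two]
    rw [h1, h2]
    conv_lhs => rw [hdec x, hBexp]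
    rw [hbb, hac]; ring
  have hap : 0 < a := by
    have he00 : e0 ≠ 0 := by
      intro h
      have : e0 0 = (0:ℝ) := by rw [h]; rfl
      rw [he0] at this
      simp [EuclideanSpace.single_apply] at this
    have : L.symm e0 ≠ 0 := by
      simp only [ne_eq, EmbeddingLike.map_eq_zero_iff]; exact he00
    have h1 := hquad e0
    have h2 : 0 < ‖L.symm e0‖ := norm_pos_iff.mpr this
    have h3 : 0 < ‖e0‖ := norm_pos_iff.mpr he00
    nlinarith
  clear_value a bb cc B
  -- conclude
  refine ⟨(Real.sqrt a)⁻¹, by positivity, ?_⟩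
  ext x
  rw [hmem, mem_closedBall_zero_iff]
  have hsq : Real.sqrt a ^ 2 = a := Real.sq_sqrt hap.le
  have hsp : 0 < Real.sqrt a := Real.sqrt_pos.mpr hap
  have hq := hquad x
  constructor
  · intro h
    have h1 : a * ‖x‖^2 ≤ 1 := by nlinarith [norm_nonneg (L.symm x)]
    have h2 : Real.sqrt a * ‖x‖ ≤ 1 := by
      nlinarith [mul_nonneg hsp.le (norm_nonneg x)]
    nlinarith [mul_le_mul_of_nonneg_left h2 (inv_nonneg.mpr hsp.le),
      inv_mul_cancel₀ hsp.ne']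
  · intro h
    have h2 : Real.sqrt a * ‖x‖ ≤ 1 := by
      nlinarith [mul_le_mul_of_nonneg_left h hsp.le, mul_inv_cancel₀ hsp.ne']
    have h3 : a * ‖x‖^2 ≤ 1 := by
      nlinarith [mul_nonneg hsp.le (norm_nonneg x)]
    nlinarith [norm_nonneg (L.symm x)]
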